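/- Let q be a power of 2 and m ≥ 3 an odd integer. If there exists a positive integer x with q^x ≡ -1 (mod m), and ν₂(x) = i-1, then every prime divisor p of m satisfies ν₂(ord_p(q)) = i. -/
import Mathlib

lemma aux_val (d x : ℕ) (hd : d ≠ 0) (hx : x ≠ 0) (h2 : d ∣ 2 * x) (h1 : ¬ d ∣ x) :
    padicValNat 2 d = padicValNat 2 x + 1 := by
  haveI : Fact (Nat.Prime 2) := ⟨Nat.prime_two⟩
  have h2x : (2 * x) ≠ 0 := by positivity
  have hb1 : padicValNat 2 (2 * x) = padicValNat 2 x + 1 := by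
    rw [padicValNat.mul two_ne_zero hx, padicValNat.self one_lt_two]; omega
  have hle : padicValNat 2 d ≤ padicValNat 2 x + 1 := by
    rw [← hb1, ← padicValNat_dvd_iff_le h2x]
    exact dvd_trans pow_padicValNat_dvd h2
  rcases Nat.lt_or_ge (padicValNat 2 d) (padicValNat 2 x + 1) with h | h
  · exfalso
    apply h1
    have hap : 2 ^ padicValNat 2 d ∣ x := by
      calc (2:ℕ) ^ padicValNat 2 d ∣ 2 ^ padicValNat 2 x := pow_dvd_pow 2 (by omega)
        _ ∣ x := pow_padicValNat_dvd
    have hcompl : ordCompl[2] d ∣ x := by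
      have h3 : ordCompl[2] d ∣ ordCompl[2] (2 * x) :=
        Nat.ordCompl_dvd_ordCompl_of_dvd h2 2
      have hfac : (2 * x).factorization 2 = x.factorization 2 + 1 := by
        rw [Nat.factorization_mul two_ne_zero hx]
        simp [Nat.Prime.factorization_self Nat.prime_two]
        omega
      have : ordCompl[2] (2 * x) = ordCompl[2] x := by
        rw [hfac, pow_succ]
        rw [mul_comm ((2:ℕ) ^ x.factorization 2) 2, ← Nat.div_div_eq_div_mul,
          Nat.mul_div_cancel_left _ two_pos]
      rw [this] at h3
      exact dvd_trans h3 (Nat.ordCompl_dvd x 2)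
    have hcop : Nat.Coprime (2 ^ padicValNat 2 d) (ordCompl[2] d) :=
      Nat.Coprime.pow_left _ (Nat.coprime_ordCompl Nat.prime_two hd)
    have := Nat.Coprime.mul_dvd_of_dvd_of_dvd hcop hap hcompl
    have hself : 2 ^ padicValNat 2 d * ordCompl[2] d = d := by
      rw [← Nat.factorization_def d Nat.prime_two]
      exact Nat.ordProj_mul_ordCompl_eq_self d 2
    rwa [hself] at this
  · omega

/-- Let `q` be a power of `2` and `m ≥ 3` odd.  If there is a positive integer `x` with
`q ^ x ≡ -1 (mod m)` and `ν₂(x) = i - 1` (with `i ≥ 1`), then every prime divisor `p` of `m`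
satisfies `ν₂(ord_p(q)) = i`. -/
theorem stmt_5 (q e m x i : ℕ) (hq : q = 2 ^ e) (hm : Odd m) (hm3 : 3 ≤ m)
    (hx : 0 < x) (hqx : (q : ZMod m) ^ x = -1) (hi : 1 ≤ i)
    (hvx : padicValNat 2 x = i - 1) :
    ∀ p : ℕ, p.Prime → p ∣ m → padicValNat 2 (orderOf (q : ZMod p)) = i := by
  intro p hp hpm
  haveI : Fact p.Prime := ⟨hp⟩
  have hp2 : p ≠ 2 := by
    rintro rfl
    rw [Nat.odd_iff] at hm
    omega
  haveI : Fact (2 < p) := ⟨lt_of_le_of_ne hp.two_le (Ne.symm hp2)⟩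
  haveI : NeZero m := ⟨by omega⟩
  have hqp : (q : ZMod p) ^ x = -1 := by
    have := congrArg (ZMod.castHom hpm (ZMod p)) hqx
    rwa [map_pow, map_neg, map_one, map_natCast] at this
  have hne : (-1 : ZMod p) ≠ 1 := ZMod.neg_one_ne_one
  set d := orderOf (q : ZMod p) with hd
  have hdvd : d ∣ 2 * x := by
    apply orderOf_dvd_of_pow_eq_one
    rw [mul_comm, pow_mul, hqp]
    ring
  have hnd : ¬ d ∣ x := by
    intro h
    rw [orderOf_dvd_iff_pow_eq_one] at h
    rw [hqp] at h
    exact hne h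
  have hd0 : d ≠ 0 := by
    intro h0
    rw [h0, zero_dvd_iff] at hdvd
    omega
  have := aux_val d x hd0 (by omega) hdvd hnd
  omega
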